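/- Let n ≥ 1 be an integer and b ∈ ℂ with b ≠ 1/2. Then the only pairs (U,V) of ℂ-subspaces of Pⁿ such that U × V is stable under all operators L_k and G_k (k ∈ ℤ) are ({0},{0}) and (Pⁿ,Pⁿ); i.e., this module over the N=1 Ramond algebra is irreducible. -/

import Mathlib

/- STATEMENT 16: super degree-n modules.  For n ≥ 1 (here n+1 with n : ℕ) and b ≠ 1/2,
the module on Pⁿ × Pⁿ with operators L_k(u,v) = (T_k^b u, T_k^{b+1/2} v) and
G_k(u,v) = (−t^k·v, T_k^{2b} u) is irreducible over the N=1 Ramond algebra: the only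
stable pairs of subspaces are ({0},{0}) and (Pⁿ,Pⁿ). -/

open LaurentPolynomial

noncomputable section

abbrev Lp := LaurentPolynomial ℂ

/-- `(T_k^c u)₀ = t^k(D+ck)u₀ + t^{k+2}·u_{n−1}` and
`(T_k^c u)_m = t^k(D+ck)u_m + t^{k+1}·u_{m−1}` for `1 ≤ m ≤ n−1`
(note `0 - 1 = n - 1` by the wrap-around subtraction of `Fin n`). -/
def Tdeg (D : Lp →ₗ[ℂ] Lp) {n : ℕ} (c : ℂ) (k : ℤ) (u : Fin (n + 1) → Lp) :
    Fin (n + 1) → Lp :=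
  fun i => T k * (D (u i) + (c * (k : ℂ)) • u i) +
    (if i = 0 then T (k + 2) else T (k + 1)) * u (i - 1)

/-- `L_k(u,v) = (T_k^b u, T_k^{b+1/2} v)` -/
def DegL (D : Lp →ₗ[ℂ] Lp) {n : ℕ} (b : ℂ) (k : ℤ) :
    (Fin (n + 1) → Lp) × (Fin (n + 1) → Lp) → (Fin (n + 1) → Lp) × (Fin (n + 1) → Lp) :=
  fun w => (Tdeg D b k w.1, Tdeg D (b + 1 / 2) k w.2)

/-- `G_k(u,v) = (−t^k·v, T_k^{2b} u)` -/
def DegG (D : Lp →ₗ[ℂ] Lp) {n : ℕ} (b : ℂ) (k : ℤ) :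
    (Fin (n + 1) → Lp) × (Fin (n + 1) → Lp) → (Fin (n + 1) → Lp) × (Fin (n + 1) → Lp) :=
  fun w => (fun i => -(T k * w.2 i), Tdeg D (2 * b) k w.1)

/-- `U × V` is stable under all the operators `L_k` and `G_k`. -/
def DegInv (D : Lp →ₗ[ℂ] Lp) {n : ℕ} (b : ℂ)
    (U V : Submodule ℂ (Fin (n + 1) → Lp)) : Prop :=
  ∀ k : ℤ, ∀ u ∈ U, ∀ v ∈ V,
    (DegL D b k (u, v)).1 ∈ U ∧ (DegL D b k (u, v)).2 ∈ V ∧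
    (DegG D b k (u, v)).1 ∈ U ∧ (DegG D b k (u, v)).2 ∈ V

/-! ### Coefficient extraction on `Lp` -/

lemma supp_ne (a : Lp) (ha : a ≠ 0) : a.coeff.support.Nonempty :=
  Finsupp.support_nonempty_iff.mpr (AddMonoidAlgebra.coeff_eq_zero.not.mpr ha)

def cf (f : Lp) (d : ℤ) : ℂ := f.coeff d

lemma cf_T_mul (a : ℤ) (f : Lp) (p : ℤ) : cf (T a * f) p = cf f (p - a) := by
  show (AddMonoidAlgebra.single a (1:ℂ) * f).coeff p = _
  rw [AddMonoidAlgebra.coeff_single_mul_apply]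
  simp [cf, sub_eq_neg_add]

lemma cf_add (f g : Lp) (p : ℤ) : cf (f + g) p = cf f p + cf g p := rfl
lemma cf_smul (c : ℂ) (f : Lp) (p : ℤ) : cf (c • f) p = c * cf f p := rfl
lemma cf_T (a p : ℤ) : cf (T a) p = if a = p then 1 else 0 := T_apply p a
lemma cf_zero (p : ℤ) : cf 0 p = 0 := rfl
lemma cf_sum {ι : Type*} (s : Finset ι) (f : ι → Lp) (p : ℤ) :
    cf (∑ i ∈ s, f i) p = ∑ i ∈ s, cf (f i) p := by
  simp only [cf, AddMonoidAlgebra.coeff_sum, Finsupp.finset_sum_apply]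
lemma single_eq_smul_T (a : ℤ) (b : ℂ) : (AddMonoidAlgebra.single a b : Lp) = b • T a := by
  rw [show (T a : Lp) = AddMonoidAlgebra.single a 1 from rfl, AddMonoidAlgebra.smul_single]; simp
lemma cf_eq_zero_of_not_mem (f : Lp) (p : ℤ) (h : p ∉ f.coeff.support) : cf f p = 0 :=
  Finsupp.notMem_support_iff.mp h
lemma mem_support_of_cf (f : Lp) (p : ℤ) (h : cf f p ≠ 0) : p ∈ f.coeff.support :=
  Finsupp.mem_support_iff.mpr h
lemma cf_ne_zero_of_mem (f : Lp) (p : ℤ) (h : p ∈ f.coeff.support) : cf f p ≠ 0 :=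
  Finsupp.mem_support_iff.mp h

lemma cf_D (D : Lp →ₗ[ℂ] Lp) (hD : ∀ m : ℤ, D (T m) = (m : ℂ) • T m) (f : Lp) (p : ℤ) :
    cf (D f) p = (p : ℂ) * cf f p := by
  induction f using AddMonoidAlgebra.induction_linear with
  | zero => rw [map_zero]; simp [cf_zero]
  | add f g hf hg => rw [map_add, cf_add, hf, hg, cf_add]; ring
  | single a b =>
      rw [single_eq_smul_T, map_smul, cf_smul, cf_smul, hD, cf_smul, cf_T]
      by_cases h : a = p <;> simp [h] <;> ring

lemma D_T_one_mul (D : Lp →ₗ[ℂ] Lp) (hD : ∀ m : ℤ, D (T m) = (m : ℂ) • T m) (f : Lp) :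
    D (T 1 * f) = T 1 * D f + T 1 * f := by
  apply AddMonoidAlgebra.ext; apply Finsupp.ext; intro p
  show cf (D (T 1 * f)) p = cf (T 1 * D f + T 1 * f) p
  rw [cf_D D hD, cf_T_mul, cf_add, cf_T_mul, cf_T_mul, cf_D D hD]
  push_cast; ring

/-! ### the global `ℤ`-grading on `Fin (n+1) → Lp` -/

variable (n : ℕ)

def idx (d : ℤ) : Fin (n + 1) :=
  ⟨(d % ((n : ℤ) + 1)).toNat, by
    have h1 : (0:ℤ) < (n:ℤ) + 1 := by positivity
    have := Int.emod_nonneg d (ne_of_gt h1)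
    have := Int.emod_lt_of_pos d h1
    omega⟩

def pw (d : ℤ) : ℤ := d / ((n : ℤ) + 1)

def coef (d : ℤ) (u : Fin (n + 1) → Lp) : ℂ := cf (u (idx n d)) (pw n d)

lemma idx_pw (p : ℤ) (i : Fin (n + 1)) :
    idx n (((n : ℤ) + 1) * p + (i : ℤ)) = i ∧ pw n (((n : ℤ) + 1) * p + (i : ℤ)) = p := by
  have h1 : (0:ℤ) < (n:ℤ) + 1 := by positivity
  have hi0 : (0:ℤ) ≤ (i : ℤ) := Int.ofNat_nonneg _
  have hi1 : (i : ℤ) < (n:ℤ) + 1 := by exact_mod_cast i.isLt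
  have hm : (((n : ℤ) + 1) * p + (i : ℤ)) % ((n : ℤ) + 1) = (i : ℤ) := by
    rw [add_comm, Int.add_mul_emod_self_left, Int.emod_eq_of_lt hi0 hi1]
  constructor
  · apply Fin.ext
    simp only [idx, hm]
    omega
  · unfold pw
    rw [add_comm, Int.add_mul_ediv_left _ _ (ne_of_gt h1), Int.ediv_eq_zero_of_lt hi0 hi1,
      zero_add]

lemma coef_apply (p : ℤ) (i : Fin (n + 1)) (u : Fin (n + 1) → Lp) :
    coef n (((n : ℤ) + 1) * p + (i : ℤ)) u = cf (u i) p := by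
  unfold coef
  rw [(idx_pw n p i).1, (idx_pw n p i).2]

lemma self_decomp (d : ℤ) : d = ((n : ℤ) + 1) * pw n d + ((idx n d : Fin (n+1)) : ℤ) := by
  have h1 : (0:ℤ) < (n:ℤ) + 1 := by positivity
  have h2 := Int.mul_ediv_add_emod d ((n : ℤ) + 1)
  have h3 : ((idx n d : Fin (n+1)) : ℤ) = d % ((n:ℤ)+1) := by
    simp only [idx]
    have := Int.emod_nonneg d (ne_of_gt h1)
    omega
  rw [h3]; unfold pw; omega

lemma coef_zero_fn (d : ℤ) : coef n d (0 : Fin (n + 1) → Lp) = 0 := rfl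

lemma coef_add (d : ℤ) (u v : Fin (n + 1) → Lp) :
    coef n d (u + v) = coef n d u + coef n d v := rfl

lemma coef_smul (d : ℤ) (c : ℂ) (u : Fin (n + 1) → Lp) :
    coef n d (c • u) = c * coef n d u := rfl

lemma coef_sum {ι : Type*} (s : Finset ι) (g : ι → (Fin (n + 1) → Lp)) (d : ℤ) :
    coef n d (∑ i ∈ s, g i) = ∑ i ∈ s, coef n d (g i) := by
  unfold coef
  rw [Finset.sum_apply]
  exact cf_sum s _ _

lemma ne_zero_of_coef (u : Fin (n + 1) → Lp) (d : ℤ) (h : coef n d u ≠ 0) : u ≠ 0 := by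
  intro h0; rw [h0] at h; exact h (coef_zero_fn n d)

/-- existence of a top degree -/
lemma exists_top (u : Fin (n + 1) → Lp) (hu : u ≠ 0) :
    ∃ Dt : ℤ, coef n Dt u ≠ 0 ∧ ∀ d, Dt < d → coef n d u = 0 := by
  classical
  set F : Finset ℤ :=
    Finset.univ.biUnion (fun i : Fin (n+1) =>
      (u i).coeff.support.image (fun p => ((n : ℤ) + 1) * p + (i : ℤ))) with hF
  have hmem : ∀ d : ℤ, coef n d u ≠ 0 → d ∈ F := by
    intro d hd
    have h1 : pw n d ∈ (u (idx n d)).coeff.support := mem_support_of_cf _ _ hd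
    rw [hF]
    apply Finset.mem_biUnion.mpr
    exact ⟨idx n d, Finset.mem_univ _,
      Finset.mem_image.mpr ⟨pw n d, h1, (self_decomp n d).symm⟩⟩
  have hne : F.Nonempty := by
    have : ∃ i, u i ≠ 0 := by
      by_contra hc; push_neg at hc; exact hu (funext hc)
    obtain ⟨i, hi⟩ := this
    obtain ⟨p, hp⟩ := supp_ne _ hi
    exact ⟨_, Finset.mem_biUnion.mpr ⟨i, Finset.mem_univ _,
      Finset.mem_image.mpr ⟨p, hp, rfl⟩⟩⟩
  refine ⟨F.max' hne, ?_, ?_⟩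
  · have h1 := F.max'_mem hne
    obtain ⟨i, -, h2⟩ := Finset.mem_biUnion.mp h1
    obtain ⟨p, hp, h3⟩ := Finset.mem_image.mp h2
    have h4 := coef_apply n p i u
    rw [h3] at h4
    rw [h4]
    exact cf_ne_zero_of_mem _ _ hp
  · intro d hd
    by_contra hc
    exact absurd (F.le_max' d (hmem d hc)) (not_le.mpr hd)

/-! ### Operators and their interaction with the grading -/

def Vmul (a : Lp) (u : Fin (n + 1) → Lp) : Fin (n + 1) → Lp := fun i => a * u i

def Eop (D : Lp →ₗ[ℂ] Lp) (u : Fin (n + 1) → Lp) : Fin (n + 1) → Lp :=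
  fun i => D (u i) + (if i = 0 then T 2 else T 1) * u (i - 1)

variable (D : Lp →ₗ[ℂ] Lp)

lemma coef_Eop (hD : ∀ m : ℤ, D (T m) = (m : ℂ) • T m) (d : ℤ) (u : Fin (n + 1) → Lp) :
    coef n d (Eop n D u) =
      ((pw n d : ℤ) : ℂ) * coef n d u + coef n (d - ((n : ℤ) + 2)) u := by
  have hdec := self_decomp n d
  have hstart : coef n d (Eop n D u) =
      cf (D (u (idx n d))) (pw n d) +
        cf ((if idx n d = 0 then (T 2 : Lp) else T 1) * u (idx n d - 1)) (pw n d) := by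
    rw [← cf_add]; rfl
  rw [hstart, cf_D D hD]
  have hcoef : coef n d u = cf (u (idx n d)) (pw n d) := rfl
  rw [hcoef]
  congr 1
  by_cases h0 : idx n d = 0
  · rw [if_pos h0, cf_T_mul]
    have hlast : (idx n d - 1 : Fin (n + 1)) = ⟨n, by omega⟩ := by
      apply Fin.ext
      rw [Fin.coe_sub_one, if_pos h0]
    have h1 : d - ((n : ℤ) + 2) =
        ((n : ℤ) + 1) * (pw n d - 2) + ((⟨n, by omega⟩ : Fin (n + 1)) : ℤ) := by
      have h2 : ((idx n d : Fin (n+1)) : ℤ) = 0 := by rw [h0]; simp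
      have h3 : ((n : ℤ) + 1) * (pw n d - 2) = ((n : ℤ) + 1) * pw n d - 2 * ((n:ℤ)+1) := by
        ring
      have h4 : ((⟨n, by omega⟩ : Fin (n + 1)) : ℤ) = (n : ℤ) := by simp
      omega
    rw [h1, coef_apply, hlast]
  · rw [if_neg h0, cf_T_mul]
    have hpos : 1 ≤ (idx n d : ℕ) := by
      rcases Nat.eq_zero_or_pos (idx n d : ℕ) with h | h
      · exact absurd (Fin.ext h) h0
      · omega
    have hval : ((idx n d - 1 : Fin (n + 1)) : ℕ) = (idx n d : ℕ) - 1 := by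
      rw [Fin.coe_sub_one, if_neg h0]
    have h1 : d - ((n : ℤ) + 2) =
        ((n : ℤ) + 1) * (pw n d - 1) + ((idx n d - 1 : Fin (n + 1)) : ℤ) := by
      have h2 : ((idx n d - 1 : Fin (n + 1)) : ℤ) = ((idx n d : Fin (n+1)) : ℤ) - 1 := by
        omega
      have h3 : ((n : ℤ) + 1) * (pw n d - 1) = ((n : ℤ) + 1) * pw n d - ((n:ℤ)+1) := by
        ring
      rw [h2]; omega
    rw [h1, coef_apply]

lemma coef_Vmul_T (k d : ℤ) (u : Fin (n + 1) → Lp) :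
    coef n d (Vmul n (T k) u) = coef n (d - ((n : ℤ) + 1) * k) u := by
  have hdec := self_decomp n d
  have hstart : coef n d (Vmul n (T k) u) = cf (T k * u (idx n d)) (pw n d) := rfl
  rw [hstart, cf_T_mul]
  have h1 : d - ((n : ℤ) + 1) * k = ((n : ℤ) + 1) * (pw n d - k) + ((idx n d : Fin (n+1)) : ℤ) := by
    have h3 : ((n : ℤ) + 1) * (pw n d - k) = ((n : ℤ) + 1) * pw n d - ((n:ℤ)+1) * k := by
      ring
    omega
  rw [h1, coef_apply]

lemma Vmul_expand (a : Lp) (u : Fin (n + 1) → Lp) :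
    Vmul n a u = ∑ q ∈ a.coeff.support, cf a q • Vmul n (T q) u := by
  funext i
  have h1 : (∑ q ∈ a.coeff.support, cf a q • Vmul n (T q) u) i
      = ∑ q ∈ a.coeff.support, cf a q • (T q * u i) := by
    rw [Finset.sum_apply]; rfl
  rw [h1]
  show a * u i = _
  conv_lhs => rw [← AddMonoidAlgebra.sum_coeff_single a]
  rw [Finsupp.sum, Finset.sum_mul]
  congr 1
  funext q
  rw [single_eq_smul_T, smul_mul_assoc]
  rfl

lemma coef_Vmul (a : Lp) (u : Fin (n + 1) → Lp) (d : ℤ) :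
    coef n d (Vmul n a u) = ∑ q ∈ a.coeff.support, cf a q * coef n (d - ((n : ℤ) + 1) * q) u := by
  rw [Vmul_expand, coef_sum]
  apply Finset.sum_congr rfl
  intro q _
  rw [coef_smul, coef_Vmul_T]

/-! ### top-degree behaviour -/

lemma top_Vmul (a : Lp) (ha : a ≠ 0) (u : Fin (n + 1) → Lp) (Dt : ℤ)
    (h2 : ∀ d, Dt < d → coef n d u = 0) :
    (coef n (((n : ℤ) + 1) * (a.coeff.support.max' (supp_ne _ ha)) + Dt)
        (Vmul n a u)
      = cf a (a.coeff.support.max' (supp_ne _ ha)) * coef n Dt u)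
    ∧ ∀ d, ((n : ℤ) + 1) * (a.coeff.support.max' (supp_ne _ ha)) + Dt < d →
        coef n d (Vmul n a u) = 0 := by
  have hne := supp_ne _ ha
  set A := a.coeff.support.max' hne with hA
  have hpos : (0 : ℤ) < (n : ℤ) + 1 := by positivity
  constructor
  · rw [coef_Vmul]
    rw [Finset.sum_eq_single_of_mem A (a.coeff.support.max'_mem hne)]
    · congr 1
      have : ((n : ℤ) + 1) * A + Dt - ((n : ℤ) + 1) * A = Dt := by ring
      rw [this]
    · intro q hq hqe
      have hqA : q < A := lt_of_le_of_ne (a.coeff.support.le_max' q hq) hqe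
      have : Dt < ((n : ℤ) + 1) * A + Dt - ((n : ℤ) + 1) * q := by
        have : ((n : ℤ) + 1) * q < ((n : ℤ) + 1) * A := by
          exact mul_lt_mul_of_pos_left hqA hpos
        omega
      rw [h2 _ this, mul_zero]
  · intro d hd
    rw [coef_Vmul]
    apply Finset.sum_eq_zero
    intro q hq
    have hqA : q ≤ A := a.coeff.support.le_max' q hq
    have : Dt < d - ((n : ℤ) + 1) * q := by
      have : ((n : ℤ) + 1) * q ≤ ((n : ℤ) + 1) * A := by
        exact mul_le_mul_of_nonneg_left hqA (le_of_lt hpos)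
      omega
    rw [h2 _ this, mul_zero]

lemma top_Eop_iter (hD : ∀ m : ℤ, D (T m) = (m : ℂ) • T m) (j : ℕ) (u : Fin (n + 1) → Lp)
    (Dt : ℤ) (h2 : ∀ d, Dt < d → coef n d u = 0) :
    (coef n (Dt + (j : ℤ) * ((n : ℤ) + 2)) ((Eop n D)^[j] u) = coef n Dt u)
    ∧ ∀ d, Dt + (j : ℤ) * ((n : ℤ) + 2) < d → coef n d ((Eop n D)^[j] u) = 0 := by
  induction j with
  | zero =>
      refine ⟨by simp, ?_⟩
      intro d hd
      simp only [Function.iterate_zero, id_eq]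
      apply h2
      push_cast at hd
      omega
  | succ j ih =>
      have hstep := fun d => coef_Eop n D hD d ((Eop n D)^[j] u)
      have hiter : (Eop n D)^[j+1] u = Eop n D ((Eop n D)^[j] u) :=
        Function.iterate_succ_apply' _ _ _
      have hjc : ((j : ℤ) + 1) * ((n : ℤ) + 2) = (j : ℤ) * ((n : ℤ) + 2) + ((n : ℤ) + 2) := by
        ring
      constructor
      · rw [hiter, hstep]
        have e1 : coef n (Dt + ((j:ℕ)+1 : ℤ) * ((n : ℤ) + 2)) ((Eop n D)^[j] u) = 0 := by
          apply ih.2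
          push_cast
          omega
        have e2 : Dt + ((j:ℕ)+1 : ℤ) * ((n : ℤ) + 2) - ((n : ℤ) + 2)
            = Dt + (j : ℤ) * ((n : ℤ) + 2) := by push_cast; ring
        push_cast
        push_cast at e1 e2
        rw [e1, e2, ih.1, mul_zero, zero_add]
      · intro d hd
        rw [hiter, hstep]
        push_cast at hd
        have e1 : coef n d ((Eop n D)^[j] u) = 0 := by apply ih.2; omega
        have e2 : coef n (d - ((n : ℤ) + 2)) ((Eop n D)^[j] u) = 0 := by apply ih.2; omega
        rw [e1, e2, mul_zero, zero_add]

lemma Eop_ne_zero (hD : ∀ m : ℤ, D (T m) = (m : ℂ) • T m) (u : Fin (n + 1) → Lp)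
    (hu : u ≠ 0) : Eop n D u ≠ 0 := by
  obtain ⟨Dt, h1, h2⟩ := exists_top n u hu
  apply ne_zero_of_coef n _ (Dt + ((n : ℤ) + 2))
  rw [coef_Eop n D hD]
  have e1 : coef n (Dt + ((n : ℤ) + 2)) u = 0 := h2 _ (by omega)
  have e2 : Dt + ((n : ℤ) + 2) - ((n : ℤ) + 2) = Dt := by ring
  rw [e1, e2, mul_zero, zero_add]
  exact h1

/-! ### linear independence of `w, Ew, E²w, …` over the Laurent ring -/

lemma dvd_small_zero (M t : ℤ) (hM : 0 < M) (h1 : -M < t) (h2 : t < M) (hd : M ∣ t) : t = 0 := by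
  obtain ⟨s, rfl⟩ := hd
  rcases lt_trichotomy s 0 with hs | hs | hs
  · have : M * s ≤ M * (-1) := mul_le_mul_of_nonneg_left (by omega) (le_of_lt hM)
    omega
  · simp [hs]
  · have : M * 1 ≤ M * s := mul_le_mul_of_nonneg_left (by omega) (le_of_lt hM)
    omega

lemma indep (hD : ∀ m : ℤ, D (T m) = (m : ℂ) • T m) (w : Fin (n + 1) → Lp) (hw : w ≠ 0)
    (c : Fin (n + 1) → Lp) (j0 : Fin (n + 1)) (hc : c j0 ≠ 0) :
    (fun i => ∑ j : Fin (n + 1), c j * ((Eop n D)^[j.val] w) i) ≠ 0 := by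
  classical
  obtain ⟨Dw, hw1, hw2⟩ := exists_top n w hw
  set J : Finset (Fin (n + 1)) := Finset.univ.filter (fun j => c j ≠ 0) with hJ
  have hj0J : j0 ∈ J := by simp [hJ, hc]
  -- degree data
  set Afun : Fin (n + 1) → ℤ := fun j => WithBot.unbotD 0 ((c j).coeff.support.max) with hAfun
  have hAeq : ∀ j (h : c j ≠ 0),
      Afun j = (c j).coeff.support.max' (supp_ne _ h) := by
    intro j h
    rw [hAfun]
    simp only
    rw [← Finset.coe_max' (supp_ne _ h)]
    rfl
  set Dfun : Fin (n + 1) → ℤ :=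
    fun j => ((n : ℤ) + 1) * Afun j + (Dw + (j.val : ℤ) * ((n : ℤ) + 2)) with hDfun
  obtain ⟨jm, hjmJ, hjmax⟩ := J.exists_max_image Dfun ⟨j0, hj0J⟩
  -- the function as a finite sum
  have hfun : (fun i => ∑ j : Fin (n + 1), c j * ((Eop n D)^[j.val] w) i)
      = ∑ j : Fin (n + 1), Vmul n (c j) ((Eop n D)^[j.val] w) := by
    funext i
    rw [Finset.sum_apply]
    rfl
  apply ne_zero_of_coef n _ (Dfun jm)
  rw [hfun, coef_sum]
  -- all terms vanish except j = jm
  rw [Finset.sum_eq_single_of_mem jm (Finset.mem_univ jm)]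
  · have hcjm : c jm ≠ 0 := by
      have := hjmJ; rw [hJ] at this; simpa using this
    have htopw := (top_Eop_iter n D hD jm.val w Dw hw2)
    have hV := top_Vmul n (c jm) hcjm ((Eop n D)^[jm.val] w)
      (Dw + (jm.val : ℤ) * ((n : ℤ) + 2)) htopw.2
    have hd1 : Dfun jm = ((n : ℤ) + 1) *
        ((c jm).coeff.support.max' (supp_ne _ hcjm))
        + (Dw + (jm.val : ℤ) * ((n : ℤ) + 2)) := by
      rw [hDfun]; simp only; rw [hAeq jm hcjm]
    rw [hd1, hV.1, htopw.1]
    exact mul_ne_zero (cf_ne_zero_of_mem _ _ ((c jm).coeff.support.max'_mem _)) hw1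
  · intro j _ hjne
    by_cases hcj : c j = 0
    · have : Vmul n (c j) ((Eop n D)^[j.val] w) = 0 := by
        funext i; simp [Vmul, hcj]
      rw [this, coef_zero_fn]
    · have hjJ : j ∈ J := by simp [hJ, hcj]
      have hle : Dfun j ≤ Dfun jm := hjmax j hjJ
      have hne : Dfun j ≠ Dfun jm := by
        intro heq
        -- (n+1) ∣ (j - jm)
        have hdvd : ((n : ℤ) + 1) ∣ ((j.val : ℤ) - (jm.val : ℤ)) := by
          have h1 : ((n : ℤ) + 1) * Afun j + (Dw + (j.val : ℤ) * ((n : ℤ) + 2))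
              = ((n : ℤ) + 1) * Afun jm + (Dw + (jm.val : ℤ) * ((n : ℤ) + 2)) := heq
          refine ⟨Afun jm - Afun j + ((jm.val : ℤ) - (j.val : ℤ)), ?_⟩
          have hexp : ((n:ℤ)+1) * (Afun jm - Afun j + ((jm.val : ℤ) - (j.val : ℤ)))
              = ((n : ℤ) + 1) * Afun jm - ((n : ℤ) + 1) * Afun j
                + ((n:ℤ)+1) * (jm.val : ℤ) - ((n:ℤ)+1) * (j.val : ℤ) := by ring
          have hexp2 : (j.val : ℤ) * ((n : ℤ) + 2) = ((n:ℤ)+1) * (j.val : ℤ) + (j.val : ℤ) := by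
            ring
          have hexp3 : (jm.val : ℤ) * ((n : ℤ) + 2) = ((n:ℤ)+1) * (jm.val : ℤ) + (jm.val : ℤ) := by
            ring
          omega
        have hj1 : (j.val : ℤ) < (n : ℤ) + 1 := by exact_mod_cast j.isLt
        have hj2 : (jm.val : ℤ) < (n : ℤ) + 1 := by exact_mod_cast jm.isLt
        have := dvd_small_zero ((n : ℤ) + 1) ((j.val : ℤ) - (jm.val : ℤ)) (by positivity)
          (by omega) (by omega) hdvd
        exact hjne (Fin.ext (by omega))
      have hlt : Dfun j < Dfun jm := lt_of_le_of_ne hle hne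
      have htopw := (top_Eop_iter n D hD j.val w Dw hw2)
      have hV := top_Vmul n (c j) hcj ((Eop n D)^[j.val] w)
        (Dw + (j.val : ℤ) * ((n : ℤ) + 2)) htopw.2
      apply hV.2
      have hd1 : Dfun j = ((n : ℤ) + 1) *
          ((c j).coeff.support.max' (supp_ne _ hcj))
          + (Dw + (j.val : ℤ) * ((n : ℤ) + 2)) := by
        rw [hDfun]; simp only; rw [hAeq j hcj]
      rw [← hd1]
      exact hlt

/-! ### module closure -/

lemma Vmul_add (a b : Lp) (v : Fin (n+1) → Lp) :
    Vmul n (a + b) v = Vmul n a v + Vmul n b v := by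
  funext i; simp [Vmul, add_mul]

lemma Vmul_zero (v : Fin (n+1) → Lp) : Vmul n (0 : Lp) v = 0 := by
  funext i; simp [Vmul]

lemma Vmul_single (q : ℤ) (c : ℂ) (v : Fin (n+1) → Lp) :
    Vmul n (AddMonoidAlgebra.single q c : Lp) v = c • Vmul n (T q) v := by
  funext i
  simp only [Vmul, Pi.smul_apply]
  rw [single_eq_smul_T, smul_mul_assoc]

lemma Vmul_mem (W : Submodule ℂ (Fin (n+1) → Lp))
    (hM : ∀ k : ℤ, ∀ v ∈ W, Vmul n (T k) v ∈ W)
    (a : Lp) (v : Fin (n+1) → Lp) (hv : v ∈ W) : Vmul n a v ∈ W := by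
  induction a using AddMonoidAlgebra.induction_linear with
  | zero => rw [Vmul_zero]; exact W.zero_mem
  | add f g hf hg => rw [Vmul_add]; exact W.add_mem hf hg
  | single q c => rw [Vmul_single]; exact W.smul_mem _ (hM q v hv)

/-! ### the window lemma -/

lemma Vmul_T_single (q : ℤ) (i : Fin (n+1)) (e : ℤ) :
    Vmul n (T q) (Pi.single i (T e)) = Pi.single i (T (q + e)) := by
  funext i'
  show T q * (Pi.single i (T e) : Fin (n+1) → Lp) i' = _
  by_cases h : i' = i
  · subst h; rw [Pi.single_eq_same, Pi.single_eq_same, ← T_add]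
  · rw [Pi.single_eq_of_ne h, Pi.single_eq_of_ne h, mul_zero]

lemma window (δ : Lp) (hδ : δ ≠ 0) (W : Submodule ℂ (Fin (n+1) → Lp))
    (hδW : ∀ f : Fin (n+1) → Lp, Vmul n δ f ∈ W) :
    ∃ S : Finset (Fin (n+1) → Lp), W ⊔ Submodule.span ℂ (↑S) = ⊤ := by
  classical
  have hne := supp_ne _ hδ
  set α := δ.coeff.support.min' hne with hα
  set β := δ.coeff.support.max' hne with hβ
  set S : Finset (Fin (n+1) → Lp) :=
    (Finset.univ ×ˢ Finset.Ico α β).image (fun x : Fin (n+1) × ℤ => Pi.single x.1 (T x.2))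
    with hS
  refine ⟨S, ?_⟩
  set G := W ⊔ Submodule.span ℂ (↑S : Set (Fin (n+1) → Lp)) with hG
  have hexp : ∀ (i : Fin (n+1)) (e : ℤ),
      Vmul n δ (Pi.single i (T e)) = ∑ q ∈ δ.coeff.support, cf δ q • (Pi.single i (T (q + e)) : Fin (n+1) → Lp) := by
    intro i e
    rw [Vmul_expand]
    apply Finset.sum_congr rfl
    intro q _
    rw [Vmul_T_single]
  have hWG : W ≤ G := le_sup_left
  have hSG : ∀ (i : Fin (n+1)) (e : ℤ), α ≤ e → e < β → Pi.single i (T e) ∈ G := by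
    intro i e h1 h2
    apply Submodule.mem_sup_right
    apply Submodule.subset_span
    rw [hS]
    refine Finset.mem_coe.mpr (Finset.mem_image.mpr ⟨(i, e), ?_, rfl⟩)
    exact Finset.mem_product.mpr ⟨Finset.mem_univ _, Finset.mem_Ico.mpr ⟨h1, h2⟩⟩
  -- upward induction
  have key_up : ∀ m : ℕ, ∀ i : Fin (n+1), Pi.single i (T (α + (m : ℤ))) ∈ G := by
    intro m
    induction m using Nat.strong_induction_on with
    | _ m ih =>
      intro i
      by_cases hm : α + (m : ℤ) < β
      · exact hSG i _ (by omega) hm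
      · push_neg at hm
        set e := α + (m : ℤ) - β with he
        have hrel := hexp i e
        rw [← Finset.add_sum_erase _ _ (δ.coeff.support.max'_mem hne)] at hrel
        have hβe : β + e = α + (m : ℤ) := by omega
        rw [hβe] at hrel
        have hlc : cf δ β ≠ 0 := cf_ne_zero_of_mem _ _ (δ.coeff.support.max'_mem hne)
        have hrw : Pi.single i (T (α + (m : ℤ))) = (cf δ β)⁻¹ •
            (Vmul n δ (Pi.single i (T e))
              - ∑ q ∈ δ.coeff.support.erase β, cf δ q • (Pi.single i (T (q + e)) : Fin (n+1) → Lp)) := by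
          rw [hrel, add_sub_cancel_right, smul_smul, inv_mul_cancel₀ hlc, one_smul]
        rw [hrw]
        apply Submodule.smul_mem
        apply Submodule.sub_mem
        · exact hWG (hδW _)
        · apply Submodule.sum_mem
          intro q hq
          apply Submodule.smul_mem
          obtain ⟨hqβ, hqs⟩ := Finset.mem_erase.mp hq
          have hq1 : q < β := lt_of_le_of_ne (δ.coeff.support.le_max' q hqs) hqβ
          have hq2 : α ≤ q := δ.coeff.support.min'_le q hqs
          have : ∃ m' : ℕ, m' < m ∧ q + e = α + (m' : ℤ) :=
            ⟨(q + e - α).toNat, by omega, by omega⟩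
          obtain ⟨m', hm', heq⟩ := this
          rw [heq]
          exact ih m' hm' i
  -- downward induction
  have key_down : ∀ m : ℕ, ∀ i : Fin (n+1), Pi.single i (T (α - 1 - (m : ℤ))) ∈ G := by
    intro m
    induction m using Nat.strong_induction_on with
    | _ m ih =>
      intro i
      set e := -1 - (m : ℤ) with he
      have hrel := hexp i e
      rw [← Finset.add_sum_erase _ _ (δ.coeff.support.min'_mem hne)] at hrel
      have hαe : α + e = α - 1 - (m : ℤ) := by omega
      rw [hαe] at hrel
      have hlc : cf δ α ≠ 0 := cf_ne_zero_of_mem _ _ (δ.coeff.support.min'_mem hne)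
      have hrw : Pi.single i (T (α - 1 - (m : ℤ))) = (cf δ α)⁻¹ •
          (Vmul n δ (Pi.single i (T e))
            - ∑ q ∈ δ.coeff.support.erase α, cf δ q • (Pi.single i (T (q + e)) : Fin (n+1) → Lp)) := by
        rw [hrel, add_sub_cancel_right, smul_smul, inv_mul_cancel₀ hlc, one_smul]
      rw [hrw]
      apply Submodule.smul_mem
      apply Submodule.sub_mem
      · exact hWG (hδW _)
      · apply Submodule.sum_mem
        intro q hq
        apply Submodule.smul_mem
        obtain ⟨hqα, hqs⟩ := Finset.mem_erase.mp hq
        have hq1 : α < q := lt_of_le_of_ne (δ.coeff.support.min'_le q hqs) (Ne.symm hqα)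
        rcases le_or_gt α (q + e) with hcase | hcase
        · have : q + e = α + ((q + e - α).toNat : ℤ) := by omega
          rw [this]
          exact key_up _ i
        · have : ∃ m' : ℕ, m' < m ∧ q + e = α - 1 - (m' : ℤ) :=
            ⟨(α - 1 - (q + e)).toNat, by omega, by omega⟩
          obtain ⟨m', hm', heq⟩ := this
          rw [heq]
          exact ih m' hm' i
  have key : ∀ (e : ℤ) (i : Fin (n+1)), Pi.single i (T e) ∈ G := by
    intro e i
    rcases le_or_gt α e with hcase | hcase
    · have : e = α + ((e - α).toNat : ℤ) := by omega
      rw [this]; exact key_up _ i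
    · have : e = α - 1 - ((α - 1 - e).toNat : ℤ) := by omega
      rw [this]; exact key_down _ i
  rw [eq_top_iff]
  intro f _
  have hdec : f = ∑ i : Fin (n+1), Pi.single i (f i) := (Finset.univ_sum_single f).symm
  rw [hdec]
  apply Submodule.sum_mem
  intro i _
  have hfi : f i = ∑ p ∈ (f i).coeff.support, cf (f i) p • (T p : Lp) := by
    conv_lhs => rw [← AddMonoidAlgebra.sum_coeff_single (f i)]
    rw [Finsupp.sum]
    apply Finset.sum_congr rfl
    intro p _
    exact single_eq_smul_T p _
  rw [hfi]
  have hsingle_sum : (Pi.single i (∑ p ∈ (f i).coeff.support, cf (f i) p • (T p : Lp)) : Fin (n+1) → Lp)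
      = ∑ p ∈ (f i).coeff.support, cf (f i) p • (Pi.single i (T p : Lp) : Fin (n+1) → Lp) := by
    exact (map_sum (LinearMap.single ℂ (fun _ : Fin (n+1) => Lp) i)
        (fun p => cf (f i) p • (T p : Lp)) (f i).coeff.support).trans
      (Finset.sum_congr rfl (fun p _ =>
        map_smul (LinearMap.single ℂ (fun _ : Fin (n+1) => Lp) i) (cf (f i) p) (T p)))
  rw [hsingle_sum]
  apply Submodule.sum_mem
  intro p _
  exact Submodule.smul_mem _ _ (key p i)

/-! ### linear-map versions of the operators -/

def EopL : (Fin (n+1) → Lp) →ₗ[ℂ] (Fin (n+1) → Lp) where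
  toFun := Eop n D
  map_add' u v := by
    funext i
    simp only [Eop, Pi.add_apply, map_add, mul_add]
    ring
  map_smul' c u := by
    funext i
    simp only [Eop, Pi.smul_apply, map_smul, RingHom.id_apply, smul_add, mul_smul_comm]

def VmulL (a : Lp) : (Fin (n+1) → Lp) →ₗ[ℂ] (Fin (n+1) → Lp) where
  toFun := Vmul n a
  map_add' u v := by
    funext i
    simp only [Vmul, Pi.add_apply, mul_add]
  map_smul' c u := by
    funext i
    simp only [Vmul, Pi.smul_apply, RingHom.id_apply, mul_smul_comm]

lemma Vmul_T_T (a b : ℤ) (y : Fin (n+1) → Lp) :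
    Vmul n (T a) (Vmul n (T b) y) = Vmul n (T (a + b)) y := by
  funext i
  show T a * (T b * y i) = T (a + b) * y i
  rw [← mul_assoc, ← T_add]

lemma Vmul_T_zero (y : Fin (n+1) → Lp) : Vmul n (T 0) y = y := by
  funext i
  show T 0 * y i = y i
  rw [T_zero, one_mul]

lemma Eop_Vmul_T1 (hD : ∀ m : ℤ, D (T m) = (m : ℂ) • T m) (y : Fin (n+1) → Lp) :
    Eop n D (Vmul n (T 1) y) = Vmul n (T 1) (Eop n D y) + Vmul n (T 1) y := by
  funext i
  show D (T 1 * y i) + (if i = 0 then (T 2:Lp) else T 1) * (T 1 * y (i-1))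
      = T 1 * (D (y i) + (if i = 0 then (T 2:Lp) else T 1) * y (i-1)) + T 1 * y i
  rw [D_T_one_mul D hD]
  ring

/-! ### quotient and trace argument -/

lemma quot_trace (hD : ∀ m : ℤ, D (T m) = (m : ℂ) • T m) (W : Submodule ℂ (Fin (n+1) → Lp))
    (hE : ∀ v ∈ W, Eop n D v ∈ W)
    (hM : ∀ k : ℤ, ∀ v ∈ W, Vmul n (T k) v ∈ W)
    (S : Finset (Fin (n+1) → Lp)) (hS : W ⊔ Submodule.span ℂ (↑S) = ⊤) : W = ⊤ := by
  classical
  haveI hfin : Module.Finite ℂ ((Fin (n+1) → Lp) ⧸ W) := by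
    rw [Module.finite_def, Submodule.fg_def]
    refine ⟨W.mkQ '' ↑S, Set.Finite.image _ S.finite_toSet, ?_⟩
    rw [Submodule.span_image]
    have h1 : Submodule.map W.mkQ ⊤ = ⊤ := by
      rw [Submodule.map_top, Submodule.range_mkQ]
    rw [← hS, Submodule.map_sup] at h1
    have h2 : Submodule.map W.mkQ W = ⊥ := by
      rw [eq_bot_iff]
      rintro x ⟨y, hy, rfl⟩
      show W.mkQ y ∈ (⊥ : Submodule ℂ _)
      rw [Submodule.mem_bot, Submodule.mkQ_apply]
      exact (Submodule.Quotient.mk_eq_zero W).mpr hy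
    rw [h2, bot_sup_eq] at h1
    exact h1
  set EQ : ((Fin (n+1) → Lp) ⧸ W) →ₗ[ℂ] ((Fin (n+1) → Lp) ⧸ W) :=
    W.mapQ W (EopL n D) (show W ≤ W.comap (EopL n D) from fun v hv => hE v hv) with hEQ
  set TQ : ((Fin (n+1) → Lp) ⧸ W) →ₗ[ℂ] ((Fin (n+1) → Lp) ⧸ W) :=
    W.mapQ W (VmulL n (T 1)) (show W ≤ W.comap (VmulL n (T 1)) from fun v hv => hM 1 v hv) with hTQ
  set TQ' : ((Fin (n+1) → Lp) ⧸ W) →ₗ[ℂ] ((Fin (n+1) → Lp) ⧸ W) :=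
    W.mapQ W (VmulL n (T (-1))) (show W ≤ W.comap (VmulL n (T (-1))) from fun v hv => hM (-1) v hv) with hTQ'
  have hTT' : TQ * TQ' = 1 := by
    apply LinearMap.ext
    intro x
    obtain ⟨y, rfl⟩ := Submodule.Quotient.mk_surjective W x
    show TQ (TQ' (Submodule.Quotient.mk y)) = _
    rw [hTQ, hTQ', Submodule.mapQ_apply, Submodule.mapQ_apply]
    have : VmulL n (T 1) (VmulL n (T (-1)) y) = y := by
      show Vmul n (T 1) (Vmul n (T (-1)) y) = y
      rw [Vmul_T_T]
      rw [show (1:ℤ) + (-1) = 0 by norm_num, Vmul_T_zero]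
    rw [this]
    rfl
  have hT'T : TQ' * TQ = 1 := by
    apply LinearMap.ext
    intro x
    obtain ⟨y, rfl⟩ := Submodule.Quotient.mk_surjective W x
    show TQ' (TQ (Submodule.Quotient.mk y)) = _
    rw [hTQ, hTQ', Submodule.mapQ_apply, Submodule.mapQ_apply]
    have : VmulL n (T (-1)) (VmulL n (T 1) y) = y := by
      show Vmul n (T (-1)) (Vmul n (T 1) y) = y
      rw [Vmul_T_T]
      rw [show (-1:ℤ) + 1 = 0 by norm_num, Vmul_T_zero]
    rw [this]
    rfl
  have hcomm : EQ * TQ = TQ * EQ + TQ := by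
    apply LinearMap.ext
    intro x
    obtain ⟨y, rfl⟩ := Submodule.Quotient.mk_surjective W x
    show EQ (TQ (Submodule.Quotient.mk y)) = (TQ * EQ + TQ) (Submodule.Quotient.mk y)
    rw [LinearMap.add_apply, Module.End.mul_apply]
    rw [hEQ, hTQ, Submodule.mapQ_apply, Submodule.mapQ_apply, Submodule.mapQ_apply,
      Submodule.mapQ_apply]
    have : EopL n D (VmulL n (T 1) y) = VmulL n (T 1) (EopL n D y) + VmulL n (T 1) y :=
      Eop_Vmul_T1 n D hD y
    rw [this, Submodule.Quotient.mk_add]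
  have t1 : LinearMap.trace ℂ _ (EQ * TQ * TQ') = LinearMap.trace ℂ _ EQ := by
    rw [mul_assoc, hTT', mul_one]
  have t2 : LinearMap.trace ℂ _ (EQ * TQ * TQ')
      = LinearMap.trace ℂ _ EQ + (Module.finrank ℂ ((Fin (n+1) → Lp) ⧸ W) : ℂ) := by
    rw [LinearMap.trace_mul_comm ℂ (EQ * TQ) TQ', hcomm, mul_add, ← mul_assoc, hT'T, one_mul,
      map_add]
    congr 1
    rw [Module.End.one_eq_id, LinearMap.trace_id]
  have hc0 : (Module.finrank ℂ ((Fin (n+1) → Lp) ⧸ W) : ℂ) = 0 := by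
    have := t1.symm.trans t2
    exact (left_eq_add.mp this)
  have hrk : Module.finrank ℂ ((Fin (n+1) → Lp) ⧸ W) = 0 := by exact_mod_cast hc0
  have hsub : Subsingleton ((Fin (n+1) → Lp) ⧸ W) := Module.finrank_zero_iff.mp hrk
  rw [eq_top_iff]
  intro x _
  have : (Submodule.Quotient.mk x : (Fin (n+1) → Lp) ⧸ W) = 0 := Subsingleton.elim _ _
  exact (Submodule.Quotient.mk_eq_zero W).mp this

/-! ### the crux: a stable nonzero submodule is everything -/

theorem crux (hD : ∀ m : ℤ, D (T m) = (m : ℂ) • T m) (W : Submodule ℂ (Fin (n+1) → Lp))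
    (hE : ∀ v ∈ W, Eop n D v ∈ W) (hM : ∀ k : ℤ, ∀ v ∈ W, Vmul n (T k) v ∈ W)
    (w : Fin (n+1) → Lp) (hwW : w ∈ W) (hw0 : w ≠ 0) : W = ⊤ := by
  classical
  haveI : IsDomain Lp := NoZeroDivisors.to_isDomain _
  have hEit : ∀ j : ℕ, (Eop n D)^[j] w ∈ W := by
    intro j
    induction j with
    | zero => simpa using hwW
    | succ j ih => rw [Function.iterate_succ_apply']; exact hE _ ih
  set A : Matrix (Fin (n+1)) (Fin (n+1)) Lp := fun i j => ((Eop n D)^[j.val] w) i with hA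
  have hdet : A.det ≠ 0 := by
    intro h0
    obtain ⟨v, hv0, hv⟩ := Matrix.exists_mulVec_eq_zero_iff.mpr h0
    obtain ⟨j0, hj0⟩ : ∃ j0, v j0 ≠ 0 := by
      by_contra hc; push_neg at hc; exact hv0 (funext hc)
    apply indep n D hD w hw0 v j0 hj0
    funext i
    have h1 := congrFun hv i
    have h2 : A.mulVec v i = ∑ j : Fin (n+1), v j * ((Eop n D)^[j.val] w) i := by
      simp only [Matrix.mulVec, dotProduct, hA]
      exact Finset.sum_congr rfl (fun j _ => mul_comm _ _)
    rw [h2] at h1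
    exact h1
  have hδW : ∀ f : Fin (n+1) → Lp, Vmul n A.det f ∈ W := by
    intro f
    have h1 : Vmul n A.det f = A.mulVec (A.adjugate.mulVec f) := by
      rw [Matrix.mulVec_mulVec, Matrix.mul_adjugate, Matrix.smul_mulVec,
        Matrix.one_mulVec]
      rfl
    have h2 : A.mulVec (A.adjugate.mulVec f)
        = ∑ j : Fin (n+1), Vmul n (A.adjugate.mulVec f j) ((Eop n D)^[j.val] w) := by
      funext i
      rw [Finset.sum_apply]
      simp only [Matrix.mulVec, dotProduct, hA]
      exact Finset.sum_congr rfl (fun j _ => mul_comm _ _)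
    rw [h1, h2]
    exact Submodule.sum_mem _ (fun j _ => Vmul_mem n W hM _ _ (hEit j.val))
  obtain ⟨S, hS⟩ := window n A.det hdet W hδW
  exact quot_trace n D hD W hE hM S hS

/-! ### the statement -/

lemma Tdeg_zero (c : ℂ) (u : Fin (n+1) → Lp) : Tdeg D c 0 u = Eop n D u := by
  funext i
  simp [Tdeg, Eop, T_zero]

lemma Tdeg_neg (c : ℂ) (k : ℤ) (u : Fin (n+1) → Lp) :
    Tdeg D c k (-u) = -(Tdeg D c k u) := by
  funext i
  simp [Tdeg, mul_add, add_comm]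

lemma Tdeg_sub_scalar (c1 c2 : ℂ) (k : ℤ) (v : Fin (n+1) → Lp) :
    Tdeg D c2 k v - Tdeg D c1 k v = ((c2 - c1) * (k : ℂ)) • Vmul n (T k) v := by
  funext i
  simp only [Tdeg, Vmul, Pi.sub_apply, Pi.smul_apply, Algebra.smul_def, map_sub, map_mul]
  ring

theorem stmt16 (D : Lp →ₗ[ℂ] Lp)
    (hD : ∀ n : ℤ, D (T n) = (n : ℂ) • T n)
    (n : ℕ) (b : ℂ) (hb : b ≠ 1 / 2) :
    ∀ U V : Submodule ℂ (Fin (n + 1) → Lp), DegInv D b U V →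
      (U = ⊥ ∧ V = ⊥) ∨ (U = ⊤ ∧ V = ⊤) := by
  intro U V h
  have hneg : ∀ v ∈ V, -v ∈ U := by
    intro v hv
    have h1 := (h 0 0 U.zero_mem v hv).2.2.1
    have h2 : (DegG D b 0 ((0 : Fin (n+1) → Lp), v)).1 = -v := by
      funext i; simp [DegG, T_zero]
    rwa [h2] at h1
  by_cases hU : U = ⊥
  · left
    refine ⟨hU, ?_⟩
    rw [eq_bot_iff]
    intro v hv
    have h1 := hneg v hv
    rw [hU, Submodule.mem_bot] at h1
    rw [Submodule.mem_bot]
    simpa using neg_eq_zero.mp h1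
  · right
    obtain ⟨u, huU, hu0⟩ := Submodule.exists_mem_ne_zero_of_ne_bot hU
    have hE : ∀ v ∈ V, Eop n D v ∈ V := by
      intro v hv
      have h1 := (h 0 0 U.zero_mem v hv).2.1
      have h2 : (DegL D b 0 ((0 : Fin (n+1) → Lp), v)).2 = Eop n D v := Tdeg_zero n D _ v
      rwa [h2] at h1
    have h2bV : ∀ (k : ℤ) (v : Fin (n+1) → Lp), v ∈ V → Tdeg D (2*b) k v ∈ V := by
      intro k v hv
      have h1 := (h k (-v) (hneg v hv) 0 V.zero_mem).2.2.2
      have h2 : (DegG D b k (-v, (0 : Fin (n+1) → Lp))).2 = -(Tdeg D (2*b) k v) := by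
        show Tdeg D (2*b) k (-v) = _
        rw [Tdeg_neg]
      rw [h2] at h1
      simpa using V.neg_mem h1
    have hbV : ∀ (k : ℤ) (v : Fin (n+1) → Lp), v ∈ V → Tdeg D (b + 1/2) k v ∈ V :=
      fun k v hv => (h k 0 U.zero_mem v hv).2.1
    have hM : ∀ k : ℤ, ∀ v ∈ V, Vmul n (T k) v ∈ V := by
      intro k v hv
      by_cases hk : k = 0
      · subst hk; rwa [Vmul_T_zero]
      · have hs : ((b - 1/2) * (k : ℂ)) ≠ 0 :=
          mul_ne_zero (sub_ne_zero.mpr hb) (Int.cast_ne_zero.mpr hk)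
        have hdiff : Tdeg D (2*b) k v - Tdeg D (b + 1/2) k v
            = ((b - 1/2) * (k : ℂ)) • Vmul n (T k) v := by
          rw [Tdeg_sub_scalar]
          congr 2
          ring
        have h1 : Tdeg D (2*b) k v - Tdeg D (b + 1/2) k v ∈ V :=
          V.sub_mem (h2bV k v hv) (hbV k v hv)
        rw [hdiff] at h1
        have h2 := V.smul_mem ((b - 1/2) * (k : ℂ))⁻¹ h1
        rwa [smul_smul, inv_mul_cancel₀ hs, one_smul] at h2
    have hwV : Eop n D u ∈ V := by
      have h1 := (h 0 u huU 0 V.zero_mem).2.2.2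
      have h2 : (DegG D b 0 (u, (0 : Fin (n+1) → Lp))).2 = Eop n D u := Tdeg_zero n D _ u
      rwa [h2] at h1
    have hw0 : Eop n D u ≠ 0 := Eop_ne_zero n D hD u hu0
    have hV : V = ⊤ := crux n D hD V hE hM _ hwV hw0
    have hUt : U = ⊤ := by
      rw [eq_top_iff]
      intro f _
      have h1 := hneg f (by rw [hV]; trivial)
      simpa using U.neg_mem h1
    exact ⟨hUt, hV⟩

end
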